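/- Let u₁, ..., u_K be convex functions on ℝⁿ with ∇u_i(x) ∈ Ω̄_i for a.e. differentiability point x, where {Ω̄_i} are disjoint compact sets, and let u = max_i u_i. Fix indices i₁,...,i_k such that the convex hulls {ch(Ω̄_{i₁}), ..., ch(Ω̄_{i_k})} form an affinely independent collection. Then for any point x₀ in the coincidence set Σ := {x : u_{i₁}(x) = ⋯ = u_{i_k}(x)}, every matrix in the Clarke generalized Jacobian of the map F(x) := (u_{i₁}(x) − u_{i_k}(x), ..., u_{i_{k−1}}(x) − u_{i_k}(x)) at x₀ has rank k − 1. -/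

import Mathlib

open Set Filter

noncomputable section

/-- The Clarke generalized Jacobian of `F` at `x₀`: the closed convex hull of all limits of
derivatives of `F` along sequences of differentiability points converging to `x₀`. -/
def clarkeJacobian {n k : ℕ}
    (F : EuclideanSpace ℝ (Fin n) → EuclideanSpace ℝ (Fin k))
    (x₀ : EuclideanSpace ℝ (Fin n)) :
    Set (EuclideanSpace ℝ (Fin n) →L[ℝ] EuclideanSpace ℝ (Fin k)) :=
  closure (convexHull ℝ
    {A | ∃ x : ℕ → EuclideanSpace ℝ (Fin n),
      (∀ m, DifferentiableAt ℝ F (x m)) ∧ Tendsto x atTop (nhds x₀) ∧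
      Tendsto (fun m => fderiv ℝ F (x m)) atTop (nhds A)})


open Metric Topology RealInnerProductSpace



theorem myIsCompact_convexHull {E : Type*} [NormedAddCommGroup E] [NormedSpace ℝ E]
    [FiniteDimensional ℝ E] {s : Set E} (hs : IsCompact s) :
    IsCompact (convexHull ℝ s) := by
  rcases s.eq_empty_or_nonempty with rfl | ⟨z₀, hz₀⟩
  · simp [convexHull_empty, isCompact_empty]
  set N := Module.finrank ℝ E + 1 with hN
  set φ : (Fin N → ℝ) × (Fin N → E) → E := fun p => ∑ i, p.1 i • p.2 i with hφdef
  have hφ : Continuous φ := by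
    apply continuous_finset_sum
    intro i _
    exact ((continuous_apply i).comp continuous_fst).smul
      ((continuous_apply i).comp continuous_snd)
  set T : Set ((Fin N → ℝ) × (Fin N → E)) :=
    (stdSimplex ℝ (Fin N)) ×ˢ (Set.univ.pi fun _ => s) with hT
  have hTc : IsCompact T := (isCompact_stdSimplex _ _).prod (isCompact_univ_pi fun _ => hs)
  have : convexHull ℝ s = φ '' T := by
    apply Subset.antisymm
    · intro x hx
      obtain ⟨ι, hfin, z, w, hrange, hindep, hpos, hsum, hx⟩ :=
        eq_pos_convex_span_of_mem_convexHull hx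
      letI := hfin
      have hcard : Fintype.card ι ≤ N := by
        refine (hindep.card_le_finrank_succ).trans ?_
        exact Nat.add_le_add_right (Submodule.finrank_le _) 1
      have e : ι ⊕ Fin (N - Fintype.card ι) ≃ Fin N :=
        ((Fintype.equivFin ι).sumCongr (Equiv.refl _)).trans
          (finSumFinEquiv.trans (finCongr (Nat.add_sub_cancel' hcard)))
      set W : Fin N → ℝ := (Sum.elim w fun _ => 0) ∘ e.symm with hW
      set Z : Fin N → E := (Sum.elim z fun _ => z₀) ∘ e.symm with hZ
      refine ⟨(W, Z), ⟨?_, ?_⟩, ?_⟩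
      · constructor
        · intro i
          rcases h : e.symm i with j | j <;> simp [hW, h]
          exact (hpos j).le
        · have : ∑ i, W i = ∑ k : ι ⊕ Fin (N - Fintype.card ι), Sum.elim w (fun _ => (0:ℝ)) k := Equiv.sum_comp e.symm _
          rw [this, Fintype.sum_sum_type]
          simpa using hsum
      · intro i _
        rcases h : e.symm i with j | j <;> simp [hZ, h]
        · exact hrange ⟨j, rfl⟩
        · exact hz₀
      · show ∑ i, W i • Z i = x
        have : ∑ i, W i • Z i
            = ∑ k : ι ⊕ Fin (N - Fintype.card ι), (Sum.elim w fun _ => (0:ℝ)) k • (Sum.elim z fun _ => z₀) k := by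
          exact Equiv.sum_comp e.symm
            (fun k => (Sum.elim w fun _ => (0:ℝ)) k • (Sum.elim z fun _ => z₀) k)
        rw [this, Fintype.sum_sum_type]
        simpa using hx
    · rintro _ ⟨⟨W, Z⟩, ⟨hW, hZ⟩, rfl⟩
      exact (convex_convexHull ℝ s).sum_mem (fun i _ => hW.1 i) hW.2
        (fun i _ => subset_convexHull ℝ s (hZ i (mem_univ i)))
  rw [this]
  exact hTc.image hφ



variable {n : ℕ}

local notation "E" => EuclideanSpace ℝ (Fin n)

/-- The set of subgradients of `f` at `x` that lie in `Ωs`. -/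
def subgradAt (f : EuclideanSpace ℝ (Fin n) → ℝ) (Ωs : Set (EuclideanSpace ℝ (Fin n)))
    (x : EuclideanSpace ℝ (Fin n)) : Set (EuclideanSpace ℝ (Fin n)) :=
  {p | p ∈ Ωs ∧ ∀ y, f x + ⟪p, y - x⟫ ≤ f y}

variable {f : EuclideanSpace ℝ (Fin n) → ℝ} {Ωs : Set (EuclideanSpace ℝ (Fin n))}

theorem conv_continuous (hf : ConvexOn ℝ univ f) : Continuous f := by
  rw [← continuousOn_univ]
  exact hf.continuousOn isOpen_univ

theorem grad_subgrad (hf : ConvexOn ℝ univ f) {x : E} (hd : DifferentiableAt ℝ f x) (y : E) :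
    f x + ⟪gradient f x, y - x⟫ ≤ f y := by
  have hg : HasFDerivAt f (InnerProductSpace.toDual ℝ _ (gradient f x)) x :=
    hasGradientAt_iff_hasFDerivAt.mp hd.hasGradientAt
  set d : ℝ := ⟪gradient f x, y - x⟫ with hd'
  have hγ : HasDerivAt (fun t : ℝ => x + t • (y - x)) (y - x) 0 := by
    simpa using ((hasDerivAt_id (0:ℝ)).smul_const (y - x)).const_add x
  have hcurve : HasDerivAt (fun t : ℝ => f (x + t • (y - x))) d 0 := by
    have h0 : x + (0:ℝ) • (y - x) = x := by simp
    have := (h0 ▸ hg).comp_hasDerivAt 0 hγ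
    simpa [hd', InnerProductSpace.toDual_apply_apply, Function.comp_def] using this
  have hslope : Tendsto (slope (fun t : ℝ => f (x + t • (y - x))) 0) (𝓝[>] 0) (𝓝 d) :=
    ((hasDerivAt_iff_tendsto_slope).mp hcurve).mono_left
      (nhdsWithin_mono 0 (fun t ht => ne_of_gt ht))
  have hbound : ∀ᶠ t in 𝓝[>] (0:ℝ),
      slope (fun t : ℝ => f (x + t • (y - x))) 0 t ≤ f y - f x := by
    filter_upwards [Ioo_mem_nhdsGT_of_mem (Set.left_mem_Ico.mpr one_pos)] with t ht
    have hcomb : x + t • (y - x) = (1 - t) • x + t • y := by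
      rw [smul_sub, sub_smul, one_smul]; abel
    have hle : f (x + t • (y - x)) ≤ (1 - t) * f x + t * f y := by
      rw [hcomb]
      exact hf.2 (mem_univ x) (mem_univ y) (by linarith [ht.2]) ht.1.le (by ring)
    rw [slope_def_field]
    simp only [zero_smul, add_zero, sub_zero]
    rw [div_le_iff₀ ht.1]
    nlinarith [ht.1]
  have : d ≤ f y - f x := le_of_tendsto hslope hbound
  linarith

theorem exists_diff_near (hf : ConvexOn ℝ univ f) (z : E) {r : ℝ} (hr : 0 < r) :
    ∃ y, dist y z < r ∧ DifferentiableAt ℝ f y := by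
  obtain ⟨K, t, ht, hK⟩ := (hf.locallyLipschitzOn isOpen_univ) (mem_univ z)
  rw [nhdsWithin_univ] at ht
  obtain ⟨ε, hε, hball⟩ := Metric.mem_nhds_iff.mp ht
  set ε' := min ε r with hε'
  have hε'pos : 0 < ε' := lt_min hε hr
  have hK' : LipschitzOnWith K f (ball z ε') :=
    hK.mono ((ball_subset_ball (min_le_left _ _)).trans hball)
  have hae := hK'.ae_differentiableWithinAt_of_mem (μ := MeasureTheory.volume)
  have hpos : 0 < MeasureTheory.volume (ball z ε') := measure_ball_pos _ _ hε'pos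
  obtain ⟨y, hy, hyd⟩ : ∃ y ∈ ball z ε', DifferentiableWithinAt ℝ f (ball z ε') y := by
    by_contra h
    push_neg at h
    have hsub : ball z ε' ⊆ {x | ¬ (x ∈ ball z ε' → DifferentiableWithinAt ℝ f (ball z ε') x)} :=
      fun x hx => by simp only [mem_setOf_eq, Classical.not_imp]; exact ⟨hx, h x hx⟩
    have := MeasureTheory.measure_mono_null hsub hae
    rw [this] at hpos
    exact lt_irrefl _ hpos
  exact ⟨y, lt_of_lt_of_le (mem_ball.mp hy) (min_le_right ε r),
    hyd.differentiableAt (isOpen_ball.mem_nhds hy)⟩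

theorem cluster_subgrad (hf : ConvexOn ℝ univ f) (hΩ : IsCompact Ωs)
    (hgrad : ∀ x, DifferentiableAt ℝ f x → gradient f x ∈ Ωs)
    {x : E} {y : ℕ → E} (hy : Tendsto y atTop (𝓝 x)) (hd : ∀ m, DifferentiableAt ℝ f (y m)) :
    ∃ p ∈ subgradAt f Ωs x, ∃ φ : ℕ → ℕ, StrictMono φ ∧
      Tendsto (fun m => gradient f (y (φ m))) atTop (𝓝 p) := by
  obtain ⟨p, hpΩ, φ, hφ, hconv⟩ := hΩ.tendsto_subseq (fun m => hgrad (y m) (hd m))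
  refine ⟨p, ⟨hpΩ, ?_⟩, φ, hφ, hconv⟩
  intro z
  have h1 : Tendsto (fun m => f (y (φ m)) + ⟪gradient f (y (φ m)), z - y (φ m)⟫) atTop
      (𝓝 (f x + ⟪p, z - x⟫)) := by
    refine Tendsto.add ?_ ?_
    · exact (conv_continuous hf).continuousAt.tendsto.comp (hy.comp hφ.tendsto_atTop)
    · exact hconv.inner (tendsto_const_nhds.sub (hy.comp hφ.tendsto_atTop))
  exact le_of_tendsto h1 (Eventually.of_forall fun m => grad_subgrad hf (hd (φ m)) z)

theorem subgrad_nonempty (hf : ConvexOn ℝ univ f) (hΩ : IsCompact Ωs)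
    (hgrad : ∀ x, DifferentiableAt ℝ f x → gradient f x ∈ Ωs) (x : E) :
    (subgradAt f Ωs x).Nonempty := by
  have h : ∀ m : ℕ, ∃ y, dist y x < 1/(m+1) ∧ DifferentiableAt ℝ f y :=
    fun m => exists_diff_near hf x (by positivity)
  choose y hy hd using h
  have hyx : Tendsto y atTop (𝓝 x) := by
    rw [tendsto_iff_dist_tendsto_zero]
    exact squeeze_zero (fun m => dist_nonneg) (fun m => (hy m).le)
      tendsto_one_div_add_atTop_nhds_zero_nat
  obtain ⟨p, hp, _⟩ := cluster_subgrad hf hΩ hgrad hyx hd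
  exact ⟨p, hp⟩
theorem slope_mono (hf : ConvexOn ℝ univ f) (x v : E) :
    MonotoneOn (fun t => (f (x + t • v) - f x) / t) (Ioi (0:ℝ)) := by
  rintro a (ha : 0 < a) b (hb : 0 < b) hab
  have hcomb : (1 - a/b) • x + (a/b) • (x + b • v) = x + a • v := by
    rw [smul_add, smul_smul, ← add_assoc, ← add_smul, sub_add_cancel, one_smul,
      div_mul_cancel₀ _ hb.ne']
  have key : f (x + a • v) ≤ (1 - a/b) * f x + (a/b) * f (x + b • v) := by
    rw [← hcomb]
    refine hf.2 (mem_univ x) (mem_univ (x + b • v)) ?_ ?_ (by ring)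
    · have : a / b ≤ 1 := (div_le_one hb).mpr hab
      linarith
    · positivity
  have key2 : f (x + a • v) * b ≤ (b - a) * f x + a * f (x + b • v) := by
    have h := mul_le_mul_of_nonneg_right key hb.le
    have e1 : ((1 - a/b) * f x + (a/b) * f (x + b • v)) * b
        = (b - a) * f x + a * f (x + b • v) := by field_simp
    linarith [e1 ▸ h]
  rw [div_le_div_iff₀ ha hb]
  nlinarith [key2]

theorem slope_lb {x : E} {p : E} (hp : p ∈ subgradAt f Ωs x) (v : E) {t : ℝ} (ht : 0 < t) :
    ⟪p, v⟫ ≤ (f (x + t • v) - f x) / t := by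
  have h := hp.2 (x + t • v)
  rw [add_sub_cancel_left, real_inner_smul_right] at h
  rw [le_div_iff₀ ht]
  linarith

/-- The support-function value of the subgradient set in direction `v`. -/
def sigmaDir (f : EuclideanSpace ℝ (Fin n) → ℝ) (Ωs : Set (EuclideanSpace ℝ (Fin n)))
    (x v : EuclideanSpace ℝ (Fin n)) : ℝ :=
  sSup ((fun p => ⟪p, v⟫) '' subgradAt f Ωs x)

theorem exists_subgrad_ge_inf (hf : ConvexOn ℝ univ f) (hΩ : IsCompact Ωs)
    (hgrad : ∀ x, DifferentiableAt ℝ f x → gradient f x ∈ Ωs) (x v : E) :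
    ∃ p ∈ subgradAt f Ωs x,
      sInf ((fun t => (f (x + t • v) - f x) / t) '' Ioi 0) ≤ ⟪p, v⟫ := by
  obtain ⟨C, hC⟩ := hΩ.isBounded.exists_norm_le
  obtain ⟨p₀, hp₀⟩ := subgrad_nonempty hf hΩ hgrad x
  set s : ℝ → ℝ := fun t => (f (x + t • v) - f x) / t with hs
  have hbdd : BddBelow (s '' Ioi 0) := by
    refine ⟨⟪p₀, v⟫, ?_⟩
    rintro r ⟨t, ht, rfl⟩
    exact slope_lb hp₀ v ht
  set L := sInf (s '' Ioi 0) with hL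
  -- local Lipschitz constant near x
  obtain ⟨K, tset, htset, hKlip⟩ := (hf.locallyLipschitzOn isOpen_univ) (mem_univ x)
  rw [nhdsWithin_univ] at htset
  obtain ⟨ε, hε, hball⟩ := Metric.mem_nhds_iff.mp htset
  have hKlip' : LipschitzOnWith K f (ball x ε) := hKlip.mono hball
  set δ : ℝ := min 1 (ε / (2 * (‖v‖ + 1))) with hδdef
  have hδpos : 0 < δ := lt_min one_pos (by positivity)
  have hδ1 : δ ≤ 1 := min_le_left _ _
  have hδε : δ * (‖v‖ + 1) < ε := by
    have h2 : δ ≤ ε / (2 * (‖v‖ + 1)) := min_le_right _ _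
    have hv : 0 < ‖v‖ + 1 := by positivity
    calc δ * (‖v‖ + 1) ≤ ε / (2 * (‖v‖ + 1)) * (‖v‖ + 1) := by
          exact mul_le_mul_of_nonneg_right h2 hv.le
      _ = ε / 2 := by field_simp
      _ < ε := by linarith
  set t : ℕ → ℝ := fun m => δ / (m + 1) with htdef
  have htpos : ∀ m, 0 < t m := fun m => by positivity
  have ht1 : ∀ m, t m ≤ δ := by
    intro m
    apply div_le_self hδpos.le
    exact le_add_of_nonneg_left (Nat.cast_nonneg m)
  choose y hy hyd using fun m =>
    exists_diff_near hf (x + t m • v) (show (0:ℝ) < t m * t m by positivity)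
  have hdist : ∀ m, ‖y m - (x + t m • v)‖ ≤ t m * t m :=
    fun m => by rw [← dist_eq_norm]; exact (hy m).le
  have hyx : ∀ m, ‖y m - x‖ ≤ t m * (‖v‖ + 1) := by
    intro m
    have : y m - x = (y m - (x + t m • v)) + t m • v := by abel
    rw [this]
    calc ‖(y m - (x + t m • v)) + t m • v‖ ≤ ‖y m - (x + t m • v)‖ + ‖t m • v‖ :=
        norm_add_le _ _
      _ ≤ t m * t m + t m * ‖v‖ := by
          refine add_le_add (hdist m) ?_
          rw [norm_smul, Real.norm_eq_abs, abs_of_pos (htpos m)]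
      _ ≤ t m * (‖v‖ + 1) := by nlinarith [htpos m, ht1 m, hδ1]
  have hyball : ∀ m, y m ∈ ball x ε := by
    intro m
    rw [mem_ball, dist_eq_norm]
    calc ‖y m - x‖ ≤ t m * (‖v‖ + 1) := hyx m
      _ ≤ δ * (‖v‖ + 1) := by
          have hv : (0:ℝ) ≤ ‖v‖ + 1 := by positivity
          exact mul_le_mul_of_nonneg_right (ht1 m) hv
      _ < ε := hδε
  have hxtball : ∀ m, x + t m • v ∈ ball x ε := by
    intro m
    rw [mem_ball, dist_eq_norm]
    have : x + t m • v - x = t m • v := by abel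
    rw [this, norm_smul, Real.norm_eq_abs, abs_of_pos (htpos m)]
    nlinarith [ht1 m, htpos m, norm_nonneg v, hδε, hδpos]
  have ht0 : Tendsto t atTop (𝓝 0) := by
    have := tendsto_one_div_add_atTop_nhds_zero_nat.const_mul δ
    simpa [htdef, div_eq_mul_inv, mul_comm, mul_assoc, mul_left_comm] using this
  have hytends : Tendsto y atTop (𝓝 x) := by
    rw [tendsto_iff_dist_tendsto_zero]
    have hb : Tendsto (fun m => t m * (‖v‖ + 1)) atTop (𝓝 0) := by
      simpa using ht0.mul_const (‖v‖ + 1)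
    refine squeeze_zero (fun m => dist_nonneg) (fun m => ?_) hb
    rw [dist_eq_norm]; exact hyx m
  obtain ⟨p, hpD, φ, hφ, hconv⟩ := cluster_subgrad hf hΩ hgrad hytends hyd
  refine ⟨p, hpD, ?_⟩
  have key : ∀ m, L - (K + C) * t m ≤ ⟪gradient f (y m), v⟫ := by
    intro m
    set g := gradient f (y m) with hg
    have hgC : ‖g‖ ≤ C := hC _ (hgrad _ (hyd m))
    have hC0 : (0:ℝ) ≤ C := le_trans (norm_nonneg g) hgC
    have h1 : f (y m) - f x ≤ ⟪g, y m - x⟫ := by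
      have h := grad_subgrad hf (hyd m) x
      have : ⟪g, x - y m⟫ = -⟪g, y m - x⟫ := by rw [← neg_sub, inner_neg_right]
      rw [this] at h
      linarith
    have hdecomp : ⟪g, y m - x⟫ = t m * ⟪g, v⟫ + ⟪g, y m - (x + t m • v)⟫ := by
      have hsplit : y m - x = t m • v + (y m - (x + t m • v)) := by abel
      rw [hsplit, inner_add_right, real_inner_smul_right]
    have herr : |⟪g, y m - (x + t m • v)⟫| ≤ C * (t m * t m) := by
      refine (abs_real_inner_le_norm _ _).trans ?_
      exact mul_le_mul hgC (hdist m) (norm_nonneg _) hC0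
    have hLip : |f (y m) - f (x + t m • v)| ≤ (K : ℝ) * (t m * t m) := by
      have := hKlip'.dist_le_mul _ (hyball m) _ (hxtball m)
      rw [Real.dist_eq, dist_eq_norm] at this
      exact this.trans (mul_le_mul_of_nonneg_left (hdist m) K.coe_nonneg)
    have hLm : L ≤ (f (x + t m • v) - f x) / t m := csInf_le hbdd ⟨t m, htpos m, rfl⟩
    rw [le_div_iff₀ (htpos m)] at hLm
    have hK1 := (abs_le.mp hLip).1
    have herr1 := (abs_le.mp herr).2
    have h2 : (L - (K + C) * t m) * t m ≤ ⟪g, v⟫ * t m := by nlinarith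
    exact le_of_mul_le_mul_right h2 (htpos m)
  have httop : Tendsto (fun m => t (φ m)) atTop (𝓝 0) := ht0.comp hφ.tendsto_atTop
  have h2 : Tendsto (fun m => L - ((K:ℝ) + C) * t (φ m)) atTop (𝓝 L) := by
    have := (tendsto_const_nhds (x := L)).sub
      ((tendsto_const_nhds (x := (K:ℝ) + C)).mul httop)
    simpa using this
  have h3 : Tendsto (fun m => ⟪gradient f (y (φ m)), v⟫) atTop (𝓝 ⟪p, v⟫) :=
    hconv.inner tendsto_const_nhds
  exact le_of_tendsto_of_tendsto' h2 h3 (fun m => key (φ m))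

theorem tendsto_slope_sigma (hf : ConvexOn ℝ univ f) (hΩ : IsCompact Ωs)
    (hgrad : ∀ x, DifferentiableAt ℝ f x → gradient f x ∈ Ωs) (x v : E) :
    Tendsto (fun t => (f (x + t • v) - f x) / t) (𝓝[>] (0:ℝ)) (𝓝 (sigmaDir f Ωs x v)) := by
  obtain ⟨C, hC⟩ := hΩ.isBounded.exists_norm_le
  obtain ⟨p₀, hp₀⟩ := subgrad_nonempty hf hΩ hgrad x
  set s : ℝ → ℝ := fun t => (f (x + t • v) - f x) / t with hs
  have hbdd : BddBelow (s '' Ioi 0) := by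
    refine ⟨⟪p₀, v⟫, ?_⟩
    rintro r ⟨t, ht, rfl⟩
    exact slope_lb hp₀ v ht
  have htendsto := (slope_mono hf x v).tendsto_nhdsGT hbdd
  have hbddA : BddAbove ((fun p => ⟪p, v⟫) '' subgradAt f Ωs x) := by
    refine ⟨C * ‖v‖, ?_⟩
    rintro r ⟨p, hp, rfl⟩
    calc ⟪p, v⟫ ≤ ‖p‖ * ‖v‖ := real_inner_le_norm p v
      _ ≤ C * ‖v‖ := mul_le_mul_of_nonneg_right (hC p hp.1) (norm_nonneg v)
  have heq : sInf (s '' Ioi 0) = sigmaDir f Ωs x v := by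
    apply le_antisymm
    · obtain ⟨p, hpD, hLp⟩ := exists_subgrad_ge_inf hf hΩ hgrad x v
      exact hLp.trans (le_csSup hbddA ⟨p, hpD, rfl⟩)
    · apply csSup_le ((subgrad_nonempty hf hΩ hgrad x).image _)
      rintro r ⟨p, hp, rfl⟩
      refine le_csInf ⟨s 1, ⟨1, Set.mem_Ioi.mpr one_pos, rfl⟩⟩ ?_
      rintro r' ⟨t, ht, rfl⟩
      exact slope_lb hp v ht
  rw [← heq]
  exact htendsto

theorem le_sigmaDir (hΩ : IsCompact Ωs) {x q : E} (hq : q ∈ subgradAt f Ωs x) (v : E) :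
    ⟪q, v⟫ ≤ sigmaDir f Ωs x v := by
  obtain ⟨C, hC⟩ := hΩ.isBounded.exists_norm_le
  refine le_csSup ⟨C * ‖v‖, ?_⟩ ⟨q, hq, rfl⟩
  rintro r ⟨p, hp, rfl⟩
  calc ⟪p, v⟫ ≤ ‖p‖ * ‖v‖ := real_inner_le_norm p v
    _ ≤ C * ‖v‖ := mul_le_mul_of_nonneg_right (hC p hp.1) (norm_nonneg v)

theorem sigmaDir_le (hf : ConvexOn ℝ univ f) (hΩ : IsCompact Ωs)
    (hgrad : ∀ x, DifferentiableAt ℝ f x → gradient f x ∈ Ωs) {x v : E} {c : ℝ}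
    (h : ∀ p ∈ subgradAt f Ωs x, ⟪p, v⟫ ≤ c) : sigmaDir f Ωs x v ≤ c := by
  apply csSup_le ((subgrad_nonempty hf hΩ hgrad x).image _)
  rintro r ⟨p, hp, rfl⟩
  exact h p hp

theorem fderiv_repr {K k : ℕ} (u : Fin K → EuclideanSpace ℝ (Fin n) → ℝ)
    (Ω : Fin K → Set (EuclideanSpace ℝ (Fin n)))
    (hconv : ∀ i, ConvexOn ℝ univ (u i))
    (hcomp : ∀ i, IsCompact (Ω i))
    (hgrad : ∀ i x, DifferentiableAt ℝ (u i) x → gradient (u i) x ∈ Ω i)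
    (ι : Fin (k + 1) → Fin K)
    (F : EuclideanSpace ℝ (Fin n) → EuclideanSpace ℝ (Fin k))
    (hF : ∀ x j, F x j = u (ι j.castSucc) x - u (ι (Fin.last k)) x)
    {x : E} (hd : DifferentiableAt ℝ F x) :
    ∃ p : Fin (k + 1) → EuclideanSpace ℝ (Fin n),
      (∀ j, p j ∈ convexHull ℝ (Ω (ι j))) ∧
      ∀ (v : EuclideanSpace ℝ (Fin n)) (j : Fin k),
        fderiv ℝ F x v j = ⟪p j.castSucc - p (Fin.last k), v⟫ := by
  set A := fderiv ℝ F x with hA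
  set b : Fin K := ι (Fin.last k) with hb
  -- derivative of each coordinate along each direction
  have hderiv : ∀ (v : E) (j : Fin k),
      HasDerivAt (fun t : ℝ => F (x + t • v) j) (A v j) 0 := by
    intro v j
    have hγ : HasDerivAt (fun t : ℝ => x + t • v) v 0 := by
      simpa using ((hasDerivAt_id (0:ℝ)).smul_const v).const_add x
    have h0 : x + (0:ℝ) • v = x := by simp
    have hAat : HasFDerivAt F A (x + (0:ℝ) • v) := by rw [h0]; exact hd.hasFDerivAt
    have hcomp1 : HasDerivAt (fun t : ℝ => F (x + t • v)) (A v) 0 := by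
      simpa [Function.comp_def] using hAat.comp_hasDerivAt 0 hγ
    have := (EuclideanSpace.proj j).hasFDerivAt.comp_hasDerivAt 0 hcomp1
    simpa [Function.comp_def] using this
  -- key support-function identity
  have hid : ∀ (v : E) (j : Fin k),
      sigmaDir (u (ι j.castSucc)) (Ω (ι j.castSucc)) x v
        = A v j + sigmaDir (u b) (Ω b) x v := by
    intro v j
    set a : Fin K := ι j.castSucc with ha
    have h1 := tendsto_slope_sigma (hconv a) (hcomp a) (hgrad a) x v
    have h2 := tendsto_slope_sigma (hconv b) (hcomp b) (hgrad b) x v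
    have hslopeF : Tendsto (slope (fun t : ℝ => F (x + t • v) j) 0) (𝓝[>] 0) (𝓝 (A v j)) :=
      ((hasDerivAt_iff_tendsto_slope).mp (hderiv v j)).mono_left
        (nhdsWithin_mono 0 (fun t ht => ne_of_gt ht))
    have h3 : Tendsto (fun t : ℝ => (u a (x + t • v) - u a x) / t) (𝓝[>] 0)
        (𝓝 (A v j + sigmaDir (u b) (Ω b) x v)) := by
      refine (hslopeF.add h2).congr' ?_
      filter_upwards [self_mem_nhdsWithin] with t (ht : 0 < t)
      rw [slope_def_field, hF, hF]
      have h00 : x + (0:ℝ) • v = x := by simp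
      rw [h00]
      rw [ha]
      ring
    exact tendsto_nhds_unique h1 h3
  obtain ⟨q, hq⟩ := subgrad_nonempty (hconv b) (hcomp b) (hgrad b) x
  set r : Fin k → E := fun j =>
    (ContinuousLinearMap.adjoint A) (EuclideanSpace.single j 1) with hrdef
  have hr : ∀ (j : Fin k) (v : E), ⟪r j, v⟫ = A v j := by
    intro j v
    rw [hrdef]
    rw [ContinuousLinearMap.adjoint_inner_left, EuclideanSpace.inner_single_left]
    simp
  have hmem : ∀ j : Fin k, r j + q ∈ convexHull ℝ (Ω (ι j.castSucc)) := by
    intro j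
    by_contra hcon
    have hcompact := myIsCompact_convexHull (hcomp (ι j.castSucc))
    obtain ⟨φf, c, hlt, hgt⟩ :=
      geometric_hahn_banach_closed_point (convex_convexHull ℝ _) hcompact.isClosed hcon
    set v := (InnerProductSpace.toDual ℝ E).symm φf with hv
    have hφv : ∀ z : E, φf z = ⟪z, v⟫ := by
      intro z
      rw [real_inner_comm]
      exact (InnerProductSpace.toDual_symm_apply).symm
    have hup : sigmaDir (u (ι j.castSucc)) (Ω (ι j.castSucc)) x v ≤ c := by
      refine sigmaDir_le (hconv _) (hcomp _) (hgrad _) ?_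
      intro p hp
      rw [← hφv p]
      exact (hlt p (subset_convexHull ℝ _ hp.1)).le
    have hlow : c < sigmaDir (u (ι j.castSucc)) (Ω (ι j.castSucc)) x v := by
      have h1 : c < φf (r j + q) := hgt
      have h2 : φf (r j + q) = A v j + ⟪q, v⟫ := by
        rw [hφv, inner_add_left, hr]
      have h3 : ⟪q, v⟫ ≤ sigmaDir (u b) (Ω b) x v := le_sigmaDir (hcomp b) hq v
      rw [hid v j]
      linarith
    linarith
  refine ⟨Fin.lastCases q (fun j => r j + q), ?_, ?_⟩
  · intro j
    refine Fin.lastCases ?_ ?_ j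
    · simp only [Fin.lastCases_last]
      exact subset_convexHull ℝ _ hq.1
    · intro i
      simp only [Fin.lastCases_castSucc]
      exact hmem i
  · intro v j
    simp only [Fin.lastCases_castSucc, Fin.lastCases_last, add_sub_cancel_right]
    exact (hr j v).symm

/-- The set of candidate Jacobians: operators whose rows are differences of points of the
convex hulls. -/
def reprSet {K : ℕ} (k : ℕ) (ι : Fin (k + 1) → Fin K)
    (Ω : Fin K → Set (EuclideanSpace ℝ (Fin n))) :
    Set (EuclideanSpace ℝ (Fin n) →L[ℝ] EuclideanSpace ℝ (Fin k)) :=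
  {A | ∃ p : Fin (k + 1) → EuclideanSpace ℝ (Fin n),
    (∀ j, p j ∈ convexHull ℝ (Ω (ι j))) ∧
    ∀ (v : EuclideanSpace ℝ (Fin n)) (j : Fin k),
      A v j = ⟪p j.castSucc - p (Fin.last k), v⟫}

theorem reprSet_limit {K k : ℕ} {ι : Fin (k + 1) → Fin K}
    {Ω : Fin K → Set (EuclideanSpace ℝ (Fin n))} (hcomp : ∀ i, IsCompact (Ω i))
    {T : ℕ → (EuclideanSpace ℝ (Fin n) →L[ℝ] EuclideanSpace ℝ (Fin k))}
    {A : EuclideanSpace ℝ (Fin n) →L[ℝ] EuclideanSpace ℝ (Fin k)}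
    (hT : ∀ m, T m ∈ reprSet k ι Ω) (hTA : Tendsto T atTop (𝓝 A)) :
    A ∈ reprSet k ι Ω := by
  choose p hp hrow using hT
  set Kset : Set (Fin (k + 1) → E) := Set.pi univ (fun j => convexHull ℝ (Ω (ι j))) with hKset
  have hKc : IsCompact Kset :=
    isCompact_univ_pi (fun j => myIsCompact_convexHull (hcomp (ι j)))
  have hpK : ∀ m, p m ∈ Kset := fun m => by
    rw [hKset, Set.mem_univ_pi]; exact hp m
  obtain ⟨P, hPK, φ, hφ, hPc⟩ := hKc.tendsto_subseq hpK
  rw [hKset, Set.mem_univ_pi] at hPK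
  refine ⟨P, hPK, ?_⟩
  intro v j
  have h1 : Tendsto (fun m => T (φ m) v j) atTop (𝓝 (A v j)) := by
    have hev : Tendsto (fun m => T (φ m) v) atTop (𝓝 (A v)) :=
      ((ContinuousLinearMap.apply ℝ (EuclideanSpace ℝ (Fin k)) v).continuous.tendsto A).comp
        (hTA.comp hφ.tendsto_atTop)
    exact ((EuclideanSpace.proj j).continuous.tendsto (A v)).comp hev
  have h2 : Tendsto (fun m => T (φ m) v j) atTop
      (𝓝 ⟪P j.castSucc - P (Fin.last k), v⟫) := by
    have hc1 : Tendsto (fun m => p (φ m) j.castSucc) atTop (𝓝 (P j.castSucc)) :=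
      (tendsto_pi_nhds.mp hPc) j.castSucc
    have hc2 : Tendsto (fun m => p (φ m) (Fin.last k)) atTop (𝓝 (P (Fin.last k))) :=
      (tendsto_pi_nhds.mp hPc) (Fin.last k)
    have := Filter.Tendsto.inner (𝕜 := ℝ) (hc1.sub hc2) (tendsto_const_nhds (x := v))
    exact this.congr (fun m => (hrow (φ m) v j).symm)
  exact tendsto_nhds_unique h1 h2

theorem reprSet_convex {K k : ℕ} {ι : Fin (k + 1) → Fin K}
    {Ω : Fin K → Set (EuclideanSpace ℝ (Fin n))} :
    Convex ℝ (reprSet (n := n) k ι Ω) := by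
  rintro A ⟨p, hp, hrowA⟩ B ⟨q, hq, hrowB⟩ a b ha hb hab
  refine ⟨fun j => a • p j + b • q j,
    fun j => (convex_convexHull ℝ _) (hp j) (hq j) ha hb hab, ?_⟩
  intro v j
  have hval : (a • A + b • B) v j = a * (A v j) + b * (B v j) := by
    simp [ContinuousLinearMap.add_apply, ContinuousLinearMap.smul_apply,
      PiLp.add_apply, PiLp.smul_apply, smul_eq_mul]
  rw [hval, hrowA, hrowB]
  have hcomb : (a • p j.castSucc + b • q j.castSucc) - (a • p (Fin.last k) + b • q (Fin.last k))
      = a • (p j.castSucc - p (Fin.last k)) + b • (q j.castSucc - q (Fin.last k)) := by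
    rw [smul_sub, smul_sub]; abel
  rw [hcomb, inner_add_left, real_inner_smul_left, real_inner_smul_left]

theorem reprSet_closed {K k : ℕ} {ι : Fin (k + 1) → Fin K}
    {Ω : Fin K → Set (EuclideanSpace ℝ (Fin n))} (hcomp : ∀ i, IsCompact (Ω i)) :
    IsClosed (reprSet (n := n) k ι Ω) := by
  refine isClosed_of_closure_subset ?_
  intro A hA
  obtain ⟨T, hT, hTA⟩ := mem_closure_iff_seq_limit.mp hA
  exact reprSet_limit hcomp hT hTA

theorem reprSet_surj {K k : ℕ} {ι : Fin (k + 1) → Fin K}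
    {Ω : Fin K → Set (EuclideanSpace ℝ (Fin n))}
    (hai : ∀ p : Fin (k + 1) → EuclideanSpace ℝ (Fin n),
      (∀ j, p j ∈ convexHull ℝ (Ω (ι j))) → AffineIndependent ℝ p)
    {A : EuclideanSpace ℝ (Fin n) →L[ℝ] EuclideanSpace ℝ (Fin k)}
    (hA : A ∈ reprSet k ι Ω) : Function.Surjective A := by
  obtain ⟨p, hp, hrow⟩ := hA
  have haff := hai p hp
  have hli0 := (affineIndependent_iff_linearIndependent_vsub ℝ p (Fin.last k)).mp haff
  have hli : LinearIndependent ℝ (fun j : Fin k => p j.castSucc - p (Fin.last k)) := by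
    have hinj : Function.Injective (fun j : Fin k =>
        (⟨j.castSucc, (Fin.castSucc_lt_last j).ne⟩ : {i : Fin (k + 1) // i ≠ Fin.last k})) := by
      intro a b h
      have := congrArg Subtype.val h
      exact Fin.castSucc_injective k this
    have := hli0.comp _ hinj
    simpa [Function.comp_def, vsub_eq_sub] using this
  suffices h : LinearMap.range (A : EuclideanSpace ℝ (Fin n) →ₗ[ℝ] EuclideanSpace ℝ (Fin k)) = ⊤ by
    intro c
    obtain ⟨v, hv⟩ := LinearMap.range_eq_top.mp h c
    exact ⟨v, hv⟩
  rw [← Submodule.orthogonal_eq_bot_iff, Submodule.eq_bot_iff]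
  intro c hc
  have hc' : ∀ v : EuclideanSpace ℝ (Fin n), ⟪A v, c⟫ = 0 := fun v =>
    (Submodule.mem_orthogonal _ c).mp hc (A v) ⟨v, rfl⟩
  set w : EuclideanSpace ℝ (Fin n) := ∑ j, c j • (p j.castSucc - p (Fin.last k)) with hw
  have hwv : ∀ v : EuclideanSpace ℝ (Fin n), ⟪w, v⟫ = ⟪A v, c⟫ := by
    intro v
    rw [hw, sum_inner, PiLp.inner_apply]
    refine Finset.sum_congr rfl ?_
    intro j _
    rw [real_inner_smul_left, ← hrow]
    simp [mul_comm]
  have hw0 : w = 0 := inner_self_eq_zero.mp ((hwv w).trans (hc' w))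
  have hcj := Fintype.linearIndependent_iff.mp hli c hw0
  ext j
  exact hcj j

/-- If the gradients of the convex functions `u i` take values in disjoint compact sets
`Ω̄ i` whose convex hulls (along the chosen indices `ι`) are affinely independent, then at
any point of the coincidence set of the chosen pieces, every element of the Clarke
generalized Jacobian of `F = (u_{ι 0} − u_{ι last}, …, u_{ι (k−1)} − u_{ι last})` has full
rank `k`, i.e. is surjective. -/
theorem clarke_jacobian_full_rank (n K k : ℕ)
    (u : Fin K → EuclideanSpace ℝ (Fin n) → ℝ)
    (Ω : Fin K → Set (EuclideanSpace ℝ (Fin n)))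
    (hconv : ∀ i, ConvexOn ℝ univ (u i))
    (hcomp : ∀ i, IsCompact (Ω i))
    (hdisj : Pairwise (Function.onFun Disjoint Ω))
    (hgrad : ∀ i x, DifferentiableAt ℝ (u i) x → gradient (u i) x ∈ Ω i)
    (ι : Fin (k + 1) → Fin K) (hι : Function.Injective ι)
    (hai : ∀ p : Fin (k + 1) → EuclideanSpace ℝ (Fin n),
      (∀ j, p j ∈ convexHull ℝ (Ω (ι j))) → AffineIndependent ℝ p)
    (F : EuclideanSpace ℝ (Fin n) → EuclideanSpace ℝ (Fin k))
    (hF : ∀ x j, F x j = u (ι j.castSucc) x - u (ι (Fin.last k)) x)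
    (x₀ : EuclideanSpace ℝ (Fin n))
    (hx₀ : ∀ j j' : Fin (k + 1), u (ι j) x₀ = u (ι j') x₀) :
    ∀ A ∈ clarkeJacobian F x₀, Function.Surjective A := by
  intro A hA
  have hS : {B | ∃ x : ℕ → EuclideanSpace ℝ (Fin n),
      (∀ m, DifferentiableAt ℝ F (x m)) ∧ Tendsto x atTop (nhds x₀) ∧
      Tendsto (fun m => fderiv ℝ F (x m)) atTop (nhds B)} ⊆ reprSet k ι Ω := by
    rintro B ⟨xs, hdiff, _, hBlim⟩
    refine reprSet_limit hcomp (fun m => ?_) hBlim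
    obtain ⟨p, hp, hrow⟩ := fderiv_repr u Ω hconv hcomp hgrad ι F hF (hdiff m)
    exact ⟨p, hp, hrow⟩
  have hsub : clarkeJacobian F x₀ ⊆ reprSet k ι Ω :=
    closure_minimal (convexHull_min hS reprSet_convex) (reprSet_closed hcomp)
  exact reprSet_surj hai (hsub hA)
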